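/- Among all K! SIC decoding orders, the identity order (1, ..., K) — corresponding to increasing normalized rates R_n/τ_n — uniquely minimizes S_σ = (2^{R_{σ(1)}}-1)/(2^{R_{σ(1)}/τ_{σ(1)}}-1) + ∑_{l=2}^K (2^{R_{σ(l)}}-1)/(2^{R_{σ(l)}/τ_{σ(l)}}-1) ∏_{k=1}^{l-1} 2^{R_{σ(k)}}, assuming R_1/τ_1 < R_2/τ_2 < ... < R_K/τ_K with all R_n, τ_n > 0. -/

import Mathlib

/-- Total power allocation coefficient sum required for NOMA to match OMA outage
performance per-user, under SIC decoding order `σ` (acting on user indices `1,…,K`). -/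
noncomputable def Stot (K : ℕ) (R τ : ℕ → ℝ) (σ : ℕ → ℕ) : ℝ :=
  ((2 : ℝ) ^ (R (σ 1)) - 1) / ((2 : ℝ) ^ (R (σ 1) / τ (σ 1)) - 1) +
    ∑ l ∈ Finset.Icc 2 K,
      (((2 : ℝ) ^ (R (σ l)) - 1) / ((2 : ℝ) ^ (R (σ l) / τ (σ l)) - 1)) *
        ∏ k ∈ Finset.Icc 1 (l - 1), (2 : ℝ) ^ (R (σ k))

namespace StotAux

open Finset

noncomputable def fc (R τ : ℕ → ℝ) (n : ℕ) : ℝ :=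
  ((2 : ℝ) ^ (R n) - 1) / ((2 : ℝ) ^ (R n / τ n) - 1)

noncomputable def gc (R : ℕ → ℝ) (n : ℕ) : ℝ := (2 : ℝ) ^ (R n)

/-- adjacent swap as a plain function -/
def sw (i n : ℕ) : ℕ := if n = i then i + 1 else if n = i + 1 then i else n

lemma sw_sw (i n : ℕ) : sw i (sw i n) = n := by
  unfold sw; split_ifs <;> omega

lemma Stot_eq_sum (K : ℕ) (hK : 1 ≤ K) (R τ : ℕ → ℝ) (σ : ℕ → ℕ) :
    Stot K R τ σ = ∑ l ∈ Icc 1 K, fc R τ (σ l) * ∏ k ∈ Icc 1 (l - 1), gc R (σ k) := by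
  have h : Icc 1 K = insert 1 (Icc 2 K) := by
    ext x; simp only [mem_Icc, mem_insert]; omega
  rw [h, Finset.sum_insert (by simp)]
  simp [Stot, fc, gc]

lemma Stot_congr (K : ℕ) (hK : 1 ≤ K) (R τ : ℕ → ℝ) (σ₁ σ₂ : ℕ → ℕ)
    (h : ∀ n ∈ Icc 1 K, σ₁ n = σ₂ n) : Stot K R τ σ₁ = Stot K R τ σ₂ := by
  rw [Stot_eq_sum K hK, Stot_eq_sum K hK]
  refine Finset.sum_congr rfl ?_
  intro l hl
  rw [mem_Icc] at hl
  rw [h l (by rw [mem_Icc]; omega)]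
  congr 1
  refine Finset.prod_congr rfl ?_
  intro k hk
  rw [mem_Icc] at hk
  rw [h k (by rw [mem_Icc]; omega)]

lemma prod_sw (K i m : ℕ) (h1 : 1 ≤ i) (R : ℕ → ℝ) (σ : ℕ → ℕ) (hm : m ≠ i) :
    ∏ k ∈ Icc 1 m, gc R (σ (sw i k)) = ∏ k ∈ Icc 1 m, gc R (σ k) := by
  refine Finset.prod_nbij' (sw i) (sw i) ?_ ?_ ?_ ?_ ?_
  · intro a ha; simp only [mem_Icc] at ha ⊢; unfold sw; split_ifs <;> omega
  · intro a ha; simp only [mem_Icc] at ha ⊢; unfold sw; split_ifs <;> omega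
  · intro a _; exact sw_sw i a
  · intro a _; exact sw_sw i a
  · intro a _; rfl

lemma gc_pos (R : ℕ → ℝ) (n : ℕ) : 0 < gc R n :=
  Real.rpow_pos_of_pos (by norm_num) _

lemma one_lt_two_rpow {x : ℝ} (hx : 0 < x) : 1 < (2 : ℝ) ^ x := by
  have h := (Real.rpow_lt_rpow_left_iff (x := (2:ℝ)) one_lt_two).mpr hx
  rwa [Real.rpow_zero] at h

/-- The core exchange inequality. -/
lemma exchange {x y u v : ℝ} (hx : 0 < x) (hy : 0 < y) (hu : 0 < u) (huv : u < v) :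
    ((2:ℝ)^x - 1) / ((2:ℝ)^u - 1) + ((2:ℝ)^y - 1) / ((2:ℝ)^v - 1) * (2:ℝ)^x <
    ((2:ℝ)^y - 1) / ((2:ℝ)^v - 1) + ((2:ℝ)^x - 1) / ((2:ℝ)^u - 1) * (2:ℝ)^y := by
  have hv : 0 < v := hu.trans huv
  have hA : 0 < (2:ℝ)^x - 1 := by linarith [one_lt_two_rpow hx]
  have hB : 0 < (2:ℝ)^y - 1 := by linarith [one_lt_two_rpow hy]
  have hU : 0 < (2:ℝ)^u - 1 := by linarith [one_lt_two_rpow hu]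
  have hV : 0 < (2:ℝ)^v - 1 := by linarith [one_lt_two_rpow hv]
  have hUV : (2:ℝ)^u - 1 < (2:ℝ)^v - 1 := by
    have := (Real.rpow_lt_rpow_left_iff (x := (2:ℝ)) one_lt_two).mpr huv
    linarith
  set A := (2:ℝ)^x - 1
  set B := (2:ℝ)^y - 1
  set U := (2:ℝ)^u - 1
  set V := (2:ℝ)^v - 1
  have h2x : (2:ℝ)^x = A + 1 := by simp [A]
  have h2y : (2:ℝ)^y = B + 1 := by simp [B]
  rw [h2x, h2y]
  have key : B / V * A < A / U * B := by
    rw [div_mul_eq_mul_div, div_mul_eq_mul_div, div_lt_div_iff₀ hV hU]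
    nlinarith [mul_pos (mul_pos hA hB) (sub_pos.mpr hUV)]
  have e1 : B / V * (A + 1) = B / V * A + B / V := by ring
  have e2 : A / U * (B + 1) = A / U * B + A / U := by ring
  rw [e1, e2]
  linarith

lemma sw_mapsTo (K i : ℕ) (h1 : 1 ≤ i) (h2 : i + 1 ≤ K) :
    Set.MapsTo (sw i) ↑(Icc 1 K) ↑(Icc 1 K) := by
  intro x hx
  simp only [coe_Icc, Set.mem_Icc] at *
  unfold sw; split_ifs <;> omega

lemma sw_bijOn (K i : ℕ) (h1 : 1 ≤ i) (h2 : i + 1 ≤ K) :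
    Set.BijOn (sw i) ↑(Icc 1 K) ↑(Icc 1 K) := by
  refine Set.InvOn.bijOn ⟨fun x _ => sw_sw i x, fun x _ => sw_sw i x⟩
    (sw_mapsTo K i h1 h2) (sw_mapsTo K i h1 h2)

/-- Swapping at an adjacent inversion strictly decreases `Stot`. -/
lemma Stot_swap (K i : ℕ) (h1 : 1 ≤ i) (h2 : i + 1 ≤ K) (R τ : ℕ → ℝ)
    (hR : ∀ n ∈ Finset.Icc 1 K, 0 < R n)
    (hτ : ∀ n ∈ Finset.Icc 1 K, 0 < τ n)
    (hord : ∀ m ∈ Finset.Icc 1 K, ∀ n ∈ Finset.Icc 1 K, m < n → R m / τ m < R n / τ n)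
    (σ : ℕ → ℕ) (hσ : Set.MapsTo σ ↑(Icc 1 K) ↑(Icc 1 K)) (hadj : σ (i + 1) < σ i) :
    Stot K R τ (σ ∘ sw i) < Stot K R τ σ := by
  have hK : 1 ≤ K := by omega
  rw [Stot_eq_sum K hK, Stot_eq_sum K hK]
  simp only [Function.comp_apply]
  have hsub : {i, i+1} ⊆ Icc 1 K := by
    intro x hx; simp only [mem_insert, mem_singleton] at hx; rw [mem_Icc]; omega
  have e1 : ∀ T : ℕ → ℝ, ∑ l ∈ Icc 1 K, T l =
      (∑ l ∈ Icc 1 K \ {i, i+1}, T l) + (T i + T (i+1)) := by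
    intro T
    rw [← Finset.sum_pair (show i ≠ i + 1 by omega), Finset.sum_sdiff hsub]
  rw [e1 (fun l => fc R τ (σ (sw i l)) * ∏ k ∈ Icc 1 (l - 1), gc R (σ (sw i k))),
      e1 (fun l => fc R τ (σ l) * ∏ k ∈ Icc 1 (l - 1), gc R (σ k))]
  have hD : ∑ l ∈ Icc 1 K \ {i, i+1}, fc R τ (σ (sw i l)) * ∏ k ∈ Icc 1 (l - 1), gc R (σ (sw i k))
      = ∑ l ∈ Icc 1 K \ {i, i+1}, fc R τ (σ l) * ∏ k ∈ Icc 1 (l - 1), gc R (σ k) := by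
    refine Finset.sum_congr rfl ?_
    intro l hl
    rw [Finset.mem_sdiff, mem_Icc] at hl
    simp only [mem_insert, mem_singleton] at hl
    have hswl : sw i l = l := by unfold sw; split_ifs <;> omega
    rw [hswl, prod_sw K i (l-1) h1 R σ (by omega)]
  rw [hD]
  apply (add_lt_add_iff_left _).mpr
  have hswi : sw i i = i + 1 := by unfold sw; split_ifs <;> omega
  have hswi' : sw i (i+1) = i := by unfold sw; split_ifs <;> omega
  have hnotmem : i ∉ Icc 1 (i - 1) := by rw [mem_Icc]; omega
  have hIcc : Icc 1 (i + 1 - 1) = insert i (Icc 1 (i - 1)) := by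
    ext x; simp only [mem_Icc, mem_insert]; omega
  rw [hIcc, Finset.prod_insert hnotmem, Finset.prod_insert hnotmem]
  rw [hswi, hswi']
  rw [prod_sw K i (i-1) h1 R σ (by omega)]
  have hPpos : 0 < ∏ k ∈ Icc 1 (i - 1), gc R (σ k) :=
    Finset.prod_pos (fun k _ => gc_pos R _)
  have hiK : i ∈ Icc 1 K := by rw [mem_Icc]; omega
  have hiK' : i + 1 ∈ Icc 1 K := by rw [mem_Icc]; omega
  have ha : σ (i+1) ∈ Icc 1 K := by
    have := hσ (Finset.mem_coe.mpr hiK'); rwa [Finset.mem_coe] at this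
  have hb : σ i ∈ Icc 1 K := by
    have := hσ (Finset.mem_coe.mpr hiK); rwa [Finset.mem_coe] at this
  have hxa : 0 < R (σ (i+1)) := hR _ ha
  have hxb : 0 < R (σ i) := hR _ hb
  have hu : 0 < R (σ (i+1)) / τ (σ (i+1)) := div_pos hxa (hτ _ ha)
  have huv : R (σ (i+1)) / τ (σ (i+1)) < R (σ i) / τ (σ i) := hord _ ha _ hb hadj
  have hcore := exchange hxa hxb hu huv
  have hmain : fc R τ (σ (i+1)) + fc R τ (σ i) * gc R (σ (i+1)) <
      fc R τ (σ i) + fc R τ (σ (i+1)) * gc R (σ i) := by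
    simpa [fc, gc] using hcore
  have h2 := mul_lt_mul_of_pos_right hmain hPpos
  nlinarith [h2]

/-- If a bijection of `Icc 1 K` is not the identity, it has an adjacent inversion. -/
lemma exists_adj (K : ℕ) (hK : 1 ≤ K) (σ : ℕ → ℕ)
    (hσ : Set.BijOn σ ↑(Icc 1 K) ↑(Icc 1 K))
    (hne : ¬ ∀ n ∈ Icc 1 K, σ n = n) :
    ∃ i, 1 ≤ i ∧ i + 1 ≤ K ∧ σ (i + 1) < σ i := by
  by_contra hcon
  push_neg at hcon
  apply hne
  have hmem : ∀ n, 1 ≤ n → n ≤ K → σ n ∈ Set.Icc 1 K := by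
    intro n h1 h2
    have := hσ.mapsTo (by simp only [coe_Icc, Set.mem_Icc]; omega : n ∈ (↑(Icc 1 K) : Set ℕ))
    simpa only [coe_Icc] using this
  have hlt : ∀ j, 1 ≤ j → j + 1 ≤ K → σ j < σ (j+1) := by
    intro j hj1 hj2
    have hle := hcon j hj1 hj2
    rcases lt_or_eq_of_le hle with h | h
    · exact h
    · exfalso
      have h1 : j ∈ (↑(Icc 1 K) : Set ℕ) := by simp only [coe_Icc, Set.mem_Icc]; omega
      have h2 : j + 1 ∈ (↑(Icc 1 K) : Set ℕ) := by simp only [coe_Icc, Set.mem_Icc]; omega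
      have := hσ.injOn h1 h2 h
      omega
  have hge : ∀ n, 1 ≤ n → n ≤ K → n ≤ σ n := by
    intro n h1
    induction n, h1 using Nat.le_induction with
    | base => intro h; exact (hmem 1 le_rfl h).1
    | succ n hn ih =>
      intro h
      have := hlt n hn (by omega)
      have := ih (by omega)
      omega
  have hle2 : ∀ d n, n + d = K → 1 ≤ n → σ n ≤ n := by
    intro d
    induction d with
    | zero =>
      intro n hn h1
      have : n = K := by omega
      subst this
      exact (hmem n h1 le_rfl).2
    | succ d ih =>
      intro n hn h1
      have h2 := ih (n+1) (by omega) (by omega)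
      have := hlt n h1 (by omega)
      omega
  intro n hn
  rw [mem_Icc] at hn
  have := hge n hn.1 hn.2
  have := hle2 (K - n) n (by omega) hn.1
  omega

/-- The set of inversions of `σ` on `Icc 1 K`. -/
def Invs (K : ℕ) (σ : ℕ → ℕ) : Finset (ℕ × ℕ) :=
  (Finset.Icc 1 K ×ˢ Finset.Icc 1 K).filter (fun p => p.1 < p.2 ∧ σ p.2 < σ p.1)

lemma invs_lt (K i : ℕ) (h1 : 1 ≤ i) (h2 : i + 1 ≤ K) (σ : ℕ → ℕ)
    (hadj : σ (i + 1) < σ i) :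
    (Invs K (σ ∘ sw i)).card < (Invs K σ).card := by
  have hmem : (i, i+1) ∈ Invs K σ := by
    simp only [Invs, Finset.mem_filter, Finset.mem_product, mem_Icc]
    refine ⟨⟨⟨h1, by omega⟩, ⟨by omega, h2⟩⟩, by omega, hadj⟩
  have hcard : (Invs K (σ ∘ sw i)).card ≤ ((Invs K σ).erase (i, i+1)).card := by
    refine Finset.card_le_card_of_injOn (fun p => (sw i p.1, sw i p.2)) ?_ ?_
    · intro p hp
      rw [Finset.mem_coe] at hp ⊢
      simp only [Invs, Finset.mem_filter, Finset.mem_product, mem_Icc, Function.comp_apply] at hp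
      obtain ⟨⟨⟨hp11, hp12⟩, hp21, hp22⟩, hplt, hpinv⟩ := hp
      have hpne : ¬ (p.1 = i ∧ p.2 = i + 1) := by
        rintro ⟨e1, e2⟩
        rw [e1, e2] at hpinv
        simp only [sw] at hpinv
        split_ifs at hpinv <;> omega
      rw [Finset.mem_erase]
      constructor
      · intro hcontra
        have e1 : sw i p.1 = i := congrArg Prod.fst hcontra
        have e2 : sw i p.2 = i + 1 := congrArg Prod.snd hcontra
        simp only [sw] at e1 e2
        split_ifs at e1 e2 <;> omega
      · simp only [Invs, Finset.mem_filter, Finset.mem_product, mem_Icc]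
        refine ⟨⟨?_, ?_⟩, ?_, hpinv⟩
        · simp only [sw]; split_ifs <;> omega
        · simp only [sw]; split_ifs <;> omega
        · simp only [sw]; split_ifs <;> omega
    · intro p _ q _ hpq
      have e1 : sw i p.1 = sw i q.1 := congrArg Prod.fst hpq
      have e2 : sw i p.2 = sw i q.2 := congrArg Prod.snd hpq
      have f1 := congrArg (sw i) e1
      have f2 := congrArg (sw i) e2
      rw [sw_sw, sw_sw] at f1
      rw [sw_sw, sw_sw] at f2
      exact Prod.ext f1 f2
  calc (Invs K (σ ∘ sw i)).card ≤ ((Invs K σ).erase (i, i+1)).card := hcard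
    _ < (Invs K σ).card := Finset.card_erase_lt_of_mem hmem

lemma key (K : ℕ) (hK : 1 ≤ K) (R τ : ℕ → ℝ)
    (hR : ∀ n ∈ Finset.Icc 1 K, 0 < R n)
    (hτ : ∀ n ∈ Finset.Icc 1 K, 0 < τ n)
    (hord : ∀ m ∈ Finset.Icc 1 K, ∀ n ∈ Finset.Icc 1 K, m < n → R m / τ m < R n / τ n) :
    ∀ m : ℕ, ∀ σ : ℕ → ℕ, Set.BijOn σ ↑(Icc 1 K) ↑(Icc 1 K) →
      (Invs K σ).card ≤ m → (¬ ∀ n ∈ Icc 1 K, σ n = n) →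
      Stot K R τ id < Stot K R τ σ := by
  intro m
  induction m using Nat.strong_induction_on with
  | _ m ih =>
    intro σ hb hm hne
    obtain ⟨i, hi1, hi2, hadj⟩ := exists_adj K hK σ hb hne
    have hb' : Set.BijOn (σ ∘ sw i) ↑(Icc 1 K) ↑(Icc 1 K) :=
      hb.comp (sw_bijOn K i hi1 hi2)
    have hlt : Stot K R τ (σ ∘ sw i) < Stot K R τ σ :=
      Stot_swap K i hi1 hi2 R τ hR hτ hord σ hb.mapsTo hadj
    have hinv : (Invs K (σ ∘ sw i)).card < (Invs K σ).card :=
      invs_lt K i hi1 hi2 σ hadj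
    by_cases hid : ∀ n ∈ Icc 1 K, (σ ∘ sw i) n = n
    · have heq : Stot K R τ id = Stot K R τ (σ ∘ sw i) :=
        Stot_congr K hK R τ id (σ ∘ sw i) (fun n hn => ((hid n hn).symm : id n = _))
      linarith
    · have hlt2 := ih (Invs K (σ ∘ sw i)).card (by omega) (σ ∘ sw i) hb' le_rfl hid
      linarith

end StotAux

theorem stmt_11 (K : ℕ) (hK : 1 ≤ K) (R τ : ℕ → ℝ)
    (hR : ∀ n ∈ Finset.Icc 1 K, 0 < R n)
    (hτ : ∀ n ∈ Finset.Icc 1 K, 0 < τ n)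
    (hord : ∀ m ∈ Finset.Icc 1 K, ∀ n ∈ Finset.Icc 1 K, m < n → R m / τ m < R n / τ n) :
    ∀ σ : ℕ → ℕ, Set.BijOn σ ↑(Finset.Icc 1 K) ↑(Finset.Icc 1 K) →
      Stot K R τ id ≤ Stot K R τ σ ∧
        (Stot K R τ id = Stot K R τ σ ↔ ∀ n ∈ Finset.Icc 1 K, σ n = n) := by
  intro σ hb
  by_cases hid : ∀ n ∈ Finset.Icc 1 K, σ n = n
  · have he : Stot K R τ id = Stot K R τ σ :=
      StotAux.Stot_congr K hK R τ id σ (fun n hn => ((hid n hn).symm : id n = _))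
    exact ⟨le_of_eq he, ⟨fun _ => hid, fun _ => he⟩⟩
  · have h := StotAux.key K hK R τ hR hτ hord (StotAux.Invs K σ).card σ hb le_rfl hid
    exact ⟨le_of_lt h, ⟨fun he => absurd he (ne_of_lt h), fun hc => absurd hc hid⟩⟩
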